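/- Let L be a finite distributive strong upper semilattice, a a minimal element of L, F ∈ D an order filter on M with F ∩ Set.Ici a nonempty, and m ∈ L with IsGLB (F ∩ Set.Ici a) m. If p is meet-irreducible and m ≤ p, then p ∈ F. -/
import Mathlib


/-- A strong upper semilattice: any two elements with a common lower bound
have a greatest lower bound. -/
def StrongUpper (L : Type*) [SemilatticeSup L] : Prop :=
  ∀ x y : L, (∃ z, z ≤ x ∧ z ≤ y) → ∃ w, IsGLB {x, y} w

/-- Every interval is a distributive lattice. -/
def IntervalDistrib (L : Type*) [SemilatticeSup L] : Prop :=
  ∀ a x y z w w' : L, a ≤ x → a ≤ y → a ≤ z →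
    IsGLB {x, y} w → IsGLB {x ⊔ z, y ⊔ z} w' → w' = w ⊔ z

/-- Meet-irreducible element. -/
def MeetIrred {L : Type*} [SemilatticeSup L] [OrderTop L] (m : L) : Prop :=
  m ≠ ⊤ ∧ ∀ p q : L, IsGLB {p, q} m → m = p ∨ m = q

private lemma glb_insert_of_glb {L : Type*} [SemilatticeSup L] {T : Set L} {s t w : L}
    (hT : IsGLB T t) (hw : IsGLB {s, t} w) : IsGLB (insert s T) w := by
  constructor
  · rintro x (rfl | hx)
    · exact hw.1 (Set.mem_insert _ _)
    · exact le_trans (hw.1 (Set.mem_insert_of_mem _ rfl)) (hT.1 hx)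
  · intro z hz
    refine hw.2 ?_
    rintro x (rfl | rfl)
    · exact hz (Set.mem_insert _ _)
    · exact hT.2 fun y hy => hz (Set.mem_insert_of_mem _ hy)

private lemma glb_exists {L : Type*} [SemilatticeSup L] (hS : StrongUpper L) (a : L) :
    ∀ S : Finset L, S.Nonempty → (∀ s ∈ S, a ≤ s) → ∃ w, IsGLB (S : Set L) w := by
  intro S hSne
  induction hSne using Finset.Nonempty.cons_induction with
  | singleton s =>
    intro _
    exact ⟨s, by simp [isGLB_singleton]⟩
  | cons s T hsT hTne ih =>
    intro hab
    obtain ⟨t, ht⟩ := ih fun x hx => hab x (Finset.mem_cons_of_mem hx)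
    have has : a ≤ s := hab s (Finset.mem_cons_self _ _)
    have hat : a ≤ t := ht.2 fun x hx => hab x (Finset.mem_cons_of_mem hx)
    obtain ⟨w, hw⟩ := hS s t ⟨a, has, hat⟩
    exact ⟨w, by simpa using glb_insert_of_glb ht hw⟩

private lemma key_lemma {L : Type*} [SemilatticeSup L] [OrderTop L]
    (hS : StrongUpper L) (hD : IntervalDistrib L) (a p : L)
    (hp : MeetIrred p) (hap : a ≤ p) :
    ∀ S : Finset L, S.Nonempty → (∀ s ∈ S, a ≤ s) →
      ∀ w, IsGLB (S : Set L) w → w ≤ p → ∃ s ∈ S, s ≤ p := by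
  intro S hSne
  induction hSne using Finset.Nonempty.cons_induction with
  | singleton s =>
    intro _ w hw hwp
    refine ⟨s, Finset.mem_singleton_self s, ?_⟩
    have : s ≤ w := hw.2 (by simp)
    exact this.trans hwp
  | cons s T hsT hTne ih =>
    intro hab w hw hwp
    have has : a ≤ s := hab s (Finset.mem_cons_self _ _)
    have habT : ∀ x ∈ T, a ≤ x := fun x hx => hab x (Finset.mem_cons_of_mem hx)
    obtain ⟨t, ht⟩ := glb_exists hS a T hTne habT
    have hat : a ≤ t := ht.2 fun x hx => habT x hx
    -- w is glb of {s, t}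
    have hwst : IsGLB {s, t} w := by
      constructor
      · rintro x (rfl | rfl)
        · exact hw.1 (by simp)
        · exact ht.2 fun y hy => hw.1 (by simp [hy])
      · intro z hz
        refine hw.2 ?_
        intro y hy
        simp only [Finset.coe_cons, Set.mem_insert_iff] at hy
        rcases hy with rfl | hy
        · exact hz (Set.mem_insert _ _)
        · exact le_trans (hz (Set.mem_insert_of_mem _ rfl)) (ht.1 hy)
    obtain ⟨w', hw'⟩ := hS (s ⊔ p) (t ⊔ p) ⟨a, has.trans le_sup_left, hat.trans le_sup_left⟩
    have heq : w' = w ⊔ p := hD a s t p w w' has hat hap hwst hw'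
    have hw'p : w' = p := by rw [heq, sup_eq_right.mpr hwp]
    rw [hw'p] at hw'
    rcases hp.2 (s ⊔ p) (t ⊔ p) hw' with h | h
    · exact ⟨s, Finset.mem_cons_self _ _, le_sup_left.trans h.ge⟩
    · obtain ⟨x, hx, hxp⟩ := ih habT t ht (le_sup_left.trans h.ge)
      exact ⟨x, Finset.mem_cons_of_mem hx, hxp⟩

theorem mem_filter_of_ge_fa {L : Type*} [SemilatticeSup L] [OrderTop L] [Finite L]
    (hS : StrongUpper L) (hD : IntervalDistrib L)
    (a : L) (ha : IsMin a)
    (F : Set L) (hF1 : ∀ m ∈ F, MeetIrred m)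
    (hF2 : ∀ m ∈ F, ∀ m', MeetIrred m' → m ≤ m' → m' ∈ F)
    (hne : (F ∩ Set.Ici a).Nonempty)
    (m : L) (hm : IsGLB (F ∩ Set.Ici a) m)
    (p : L) (hp : MeetIrred p) (hmp : m ≤ p) :
    p ∈ F := by
  have hfin : (F ∩ Set.Ici a).Finite := Set.toFinite _
  set S := hfin.toFinset with hSdef
  have hScoe : (S : Set L) = F ∩ Set.Ici a := hfin.coe_toFinset
  have hSne : S.Nonempty := by
    rw [← Finset.coe_nonempty, hScoe]; exact hne
  have habS : ∀ s ∈ S, a ≤ s := by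
    intro s hs
    have : s ∈ F ∩ Set.Ici a := by rw [← hScoe]; exact_mod_cast hs
    exact this.2
  have ham : a ≤ m := hm.2 fun x hx => hx.2
  have hap : a ≤ p := ham.trans hmp
  have hmS : IsGLB (S : Set L) m := by rw [hScoe]; exact hm
  obtain ⟨s, hs, hsp⟩ := key_lemma hS hD a p hp hap S hSne habS m hmS hmp
  have hsF : s ∈ F ∩ Set.Ici a := by rw [← hScoe]; exact_mod_cast hs
  exact hF2 s hsF.1 p hp hsp
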